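/- Let f be a Plott function on a finite set X and let S = supp(f) = {x ∈ X : f({x}) = {x}} be its support. Then for every A ⊆ X, f(A) = f(A ∩ S). -/

import Mathlib

open Set

variable {X Y Z : Type*}

/-- A choice function: `f A ⊆ A` for all `A`. -/
def IsChoice (f : Set X → Set X) : Prop := ∀ A, f A ⊆ A

/-- A Plott function: choice function satisfying path independence. -/
def IsPlott (f : Set X → Set X) : Prop :=
  IsChoice f ∧ ∀ A B : Set X, f (A ∪ B) = f (f A ∪ B)

/-- a Plott function only depends on the intersection with its support. -/
theorem plott_support {X : Type*} [Fintype X] (f : Set X → Set X)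
    (hf : IsPlott f) :
    ∀ A : Set X, f A = f (A ∩ {x | f {x} = {x}}) := by
  classical
  set S : Set X := {x | f {x} = {x}} with hS
  have key : ∀ x, x ∉ S → ∀ B : Set X, f (insert x B) = f B := by
    intro x hx B
    have hsub := hf.1 {x}
    have hx' : f {x} = ∅ := by
      rcases Set.subset_singleton_iff_eq.mp hsub with h | h
      · exact h
      · exact absurd h hx
    have h2 := hf.2 {x} B
    simpa [Set.singleton_union, hx'] using h2
  have main : ∀ n : ℕ, ∀ A : Set X, (A \ S).ncard = n → f A = f (A ∩ S) := by
    intro n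
    induction n with
    | zero =>
      intro A hA
      have hfin : (A \ S).Finite := Set.toFinite _
      have hempty : A \ S = ∅ := (Set.ncard_eq_zero hfin).mp hA
      have : A ∩ S = A := by
        apply Set.inter_eq_self_of_subset_left
        intro x hx
        by_contra hxS
        have : x ∈ A \ S := ⟨hx, hxS⟩
        rw [hempty] at this
        exact this
      rw [this]
    | succ k ih =>
      intro A hA
      have hne : (A \ S).Nonempty := by
        rw [← Set.ncard_pos (Set.toFinite _)] at *
        omega
      obtain ⟨x, hxA, hxS⟩ := hne
      have hins : insert x (A \ {x}) = A := Set.insert_diff_singleton.trans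
        (Set.insert_eq_self.mpr hxA)
      have h1 : f A = f (A \ {x}) := by
        conv_lhs => rw [← hins]
        exact key x hxS _
      have hcard : ((A \ {x}) \ S).ncard = k := by
        have : (A \ {x}) \ S = (A \ S) \ {x} := by
          ext y; constructor <;> rintro ⟨⟨h1,h2⟩,h3⟩ <;> exact ⟨⟨h1,h3⟩,h2⟩
        rw [this, Set.ncard_diff_singleton_of_mem (show x ∈ A \ S from ⟨hxA, hxS⟩), hA]
        omega
      have h2 := ih (A \ {x}) hcard
      have h3 : (A \ {x}) ∩ S = A ∩ S := by
        ext y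
        constructor
        · rintro ⟨⟨hyA, _⟩, hyS⟩; exact ⟨hyA, hyS⟩
        · rintro ⟨hyA, hyS⟩
          refine ⟨⟨hyA, ?_⟩, hyS⟩
          rintro rfl; exact hxS hyS
      rw [h1, h2, h3]
  intro A
  exact main (A \ S).ncard A rfl
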